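/- Fix n ≥ 1, p ∈ [0,1], x_0 ≥ 1, strictly increasing observation times 0 = t_0 < t_1 < ⋯ < t_n, and (y_1, …, y_n) ∈ ℕ^n. Then the map λ ↦ L(x_0, y_1, …, y_n) (with υ_{i−1} = exp(−λ(t_i − t_{i−1}))) is differentiable on (0, ∞), and its derivative equals Σ_{(x_1,…,x_n) ∈ (ℕ∖{0})^n} Σ_{j=1}^{n} (t_j − t_{j−1}) · ((x_j υ_{j−1} − x_{j−1}) / (1 − υ_{j−1})) · Π_{i=1}^{n} C(x_i, y_i) p^{y_i} q^{x_i − y_i} C(x_i − 1, x_{i−1} − 1) υ_{i−1}^{x_{i−1}} (1 − υ_{i−1})^{x_i − x_{i−1}}, this series being absolutely convergent. -/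

import Mathlib

open scoped BigOperators

noncomputable section

/-- Binomial coefficient `C(m,k)` for integers, with the convention that it is `0`
when `k < 0` or `k > m`. -/
def ichoose (m k : ℤ) : ℝ := if 0 ≤ k ∧ k ≤ m then ((m.toNat).choose k.toNat : ℝ) else 0

/-- The previous population size: `prevx x0 xs i` is `x0` if `i = 0` and `xs (i-1)` otherwise. -/
def prevx (x0 : ℕ) (xs : ℕ → ℕ) (i : ℕ) : ℕ := if i = 0 then x0 else xs (i - 1)

/-- Extension of a tuple `f : Fin n → ℕ` to all of `ℕ`, with default value `d` beyond `n`. -/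
def extFin (n : ℕ) (f : Fin n → ℕ) (d : ℕ) : ℕ → ℕ := fun i => if h : i < n then f ⟨i, h⟩ else d

/-- Extension of a positive tuple of population sizes to all of `ℕ`. -/
def xbar (n : ℕ) (x : Fin n → ℕ+) : ℕ → ℕ := extFin n (fun j => (x j : ℕ)) 1

/-- The summand of the POPBP likelihood: for hidden trajectory `xs = (x_1, …, x_n)`
(indexed here by `i ∈ {0, …, n-1}`, so `xs i = x_{i+1}`), data `y = (y_1, …, y_n)`
(again `y i = y_{i+1}`), initial population `x0`, detection probability `p` and
transition parameters `υ = (υ_0, …, υ_{n-1})`, this is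
`∏_{i=1}^{n} C(x_i, y_i) p^{y_i} q^{x_i - y_i} C(x_i - 1, x_{i-1} - 1) υ_{i-1}^{x_{i-1}} (1-υ_{i-1})^{x_i - x_{i-1}}`. -/
def popbpTerm (n : ℕ) (p : ℝ) (υ : ℕ → ℝ) (x0 : ℕ) (y : ℕ → ℕ) (xs : ℕ → ℕ) : ℝ :=
  ∏ i ∈ Finset.range n,
    (ichoose (xs i) (y i) * p ^ (y i) * (1 - p) ^ (xs i - y i) *
      ichoose ((xs i : ℤ) - 1) ((prevx x0 xs i : ℤ) - 1) *
      υ i ^ (prevx x0 xs i) * (1 - υ i) ^ (xs i - prevx x0 xs i))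

/-- The POPBP likelihood `L(x_0, y_1, …, y_n)`: the sum over hidden trajectories
`(x_1, …, x_n) ∈ (ℕ∖{0})^n` of `popbpTerm`. -/
def popbpL (n : ℕ) (p : ℝ) (υ : ℕ → ℝ) (x0 : ℕ) (y : Fin n → ℕ) : ℝ :=
  ∑' x : Fin n → ℕ+, popbpTerm n p υ x0 (extFin n y 0) (xbar n x)

/-- The transition parameters `υ_{i} = exp(-λ (t_{i+1} - t_i))` of the pure birth process
with birth rate `lam` and observation times `t`. -/
def upsRate (lam : ℝ) (t : ℕ → ℝ) (i : ℕ) : ℝ := Real.exp (-lam * (t (i + 1) - t i))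

/-- The summand `g(y) = (∂L/∂λ (x0, y))² / L(x0, y)` of the Fisher information of the POPBP,
taken to be `0` when `L(x0, y) = 0`. -/
def popbpG (n : ℕ) (p : ℝ) (t : ℕ → ℝ) (lam : ℝ) (x0 : ℕ) (y : Fin n → ℕ) : ℝ :=
  if popbpL n p (upsRate lam t) x0 y = 0 then 0
  else (deriv (fun μ => popbpL n p (upsRate μ t) x0 y) lam) ^ 2 /
    popbpL n p (upsRate lam t) x0 y

/-- The Fisher information `FI(λ; t_1, …, t_n) = Σ_{y ∈ ℕ^n} (∂L/∂λ (x0, y))² / L(x0, y)`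
of the POPBP with birth rate `lam`, detection probability `p`, initial population `x0`
and observation times `t`. -/
def popbpFI (n : ℕ) (p : ℝ) (t : ℕ → ℝ) (lam : ℝ) (x0 : ℕ) : ℝ :=
  ∑' y : Fin n → ℕ, popbpG n p t lam x0 y

section PopbpAux

set_option maxHeartbeats 1000000

lemma ichoose_nonneg (m k : ℤ) : 0 ≤ ichoose m k := by
  unfold ichoose; split <;> positivity

lemma ichoose_eq_zero_of_lt {m k : ℤ} (h : m < k) : ichoose m k = 0 := by
  unfold ichoose; rw [if_neg (by omega)]

lemma ichoose_cast {b c : ℕ} (h1 : 1 ≤ b) (hbc : b ≤ c) :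
    ichoose ((c : ℤ) - 1) ((b : ℤ) - 1) = (((c - 1).choose (b - 1) : ℕ) : ℝ) := by
  unfold ichoose
  rw [if_pos (by omega)]
  have h2 : ((c : ℤ) - 1).toNat = c - 1 := by omega
  have h3 : ((b : ℤ) - 1).toNat = b - 1 := by omega
  rw [h2, h3]

lemma xbar_pos (m : ℕ) (x : Fin m → ℕ+) (i : ℕ) : 1 ≤ xbar m x i := by
  unfold xbar extFin
  split
  · exact (x _).pos
  · exact le_refl 1

lemma prevx_pos {x0 : ℕ} (hx0 : 1 ≤ x0) (m : ℕ) (x : Fin m → ℕ+) (i : ℕ) :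
    1 ≤ prevx x0 (xbar m x) i := by
  unfold prevx; split
  · exact hx0
  · exact xbar_pos m x _

lemma xbar_snoc_lt {m : ℕ} (z : Fin m → ℕ+) (b : ℕ+) {i : ℕ} (h : i < m) :
    xbar (m + 1) (Fin.snoc z b) i = xbar m z i := by
  unfold xbar extFin
  rw [dif_pos (h.trans (Nat.lt_succ_self m)), dif_pos h]
  have : (⟨i, h.trans (Nat.lt_succ_self m)⟩ : Fin (m + 1)) = Fin.castSucc ⟨i, h⟩ := rfl
  simp only [this, Fin.snoc_castSucc]

lemma xbar_snoc_last {m : ℕ} (z : Fin m → ℕ+) (b : ℕ+) :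
    xbar (m + 1) (Fin.snoc z b) m = (b : ℕ) := by
  unfold xbar extFin
  rw [dif_pos (Nat.lt_succ_self m)]
  have : (⟨m, Nat.lt_succ_self m⟩ : Fin (m + 1)) = Fin.last m := rfl
  simp only [this, Fin.snoc_last]

lemma prevx_snoc_lt {x0 m : ℕ} (z : Fin m → ℕ+) (b : ℕ+) {i : ℕ} (h : i < m) :
    prevx x0 (xbar (m + 1) (Fin.snoc z b)) i = prevx x0 (xbar m z) i := by
  unfold prevx
  split
  · rfl
  · exact xbar_snoc_lt z b (by omega)

lemma prevx_snoc_m {x0 m : ℕ} (z : Fin m → ℕ+) (b : ℕ+) :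
    prevx x0 (xbar (m + 1) (Fin.snoc z b)) m = prevx x0 (xbar m z) m := by
  unfold prevx
  split
  · rfl
  · exact xbar_snoc_lt z b (by omega)

lemma prevx_snoc_succ {x0 m : ℕ} (z : Fin m → ℕ+) (b : ℕ+) :
    prevx x0 (xbar (m + 1) (Fin.snoc z b)) (m + 1) = (b : ℕ) := by
  unfold prevx
  rw [if_neg (by omega)]
  simpa using xbar_snoc_last z b

/-- Negative binomial sum with geometric weight. -/
lemma negbin_hasSum {v r : ℝ} (hv0 : 0 < v) (hv1 : v < 1) (hr : 0 < r)
    (hwr : (1 - v) * r < 1) {a : ℕ} (ha : 1 ≤ a) :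
    HasSum (fun b : ℕ+ =>
        ichoose (((b : ℕ) : ℤ) - 1) ((a : ℤ) - 1) * v ^ a * (1 - v) ^ ((b : ℕ) - a)
          * r ^ (b : ℕ))
      ((v * r / (1 - (1 - v) * r)) ^ a) := by
  have hw0 : 0 < 1 - v := by linarith
  have hden : 0 < 1 - (1 - v) * r := by linarith
  have hs0 : 0 ≤ (1 - v) * r := by positivity
  have hs1 : ‖(1 - v) * r‖ < 1 := by rw [Real.norm_eq_abs, abs_of_nonneg hs0]; exact hwr
  set f : ℕ+ → ℝ := fun b =>
    ichoose (((b : ℕ) : ℤ) - 1) ((a : ℤ) - 1) * v ^ a * (1 - v) ^ ((b : ℕ) - a)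
      * r ^ (b : ℕ) with hf
  set ι : ℕ → ℕ+ := fun k => ⟨a + k, by omega⟩ with hι
  have hinj : Function.Injective ι := by
    intro k l hkl
    have h : a + k = a + l := congrArg Subtype.val hkl
    omega
  have hvanish : ∀ b : ℕ+, b ∉ Set.range ι → f b = 0 := by
    intro b hb
    have hba : (b : ℕ) < a := by
      by_contra hcon
      push_neg at hcon
      refine hb ⟨(b : ℕ) - a, ?_⟩
      apply Subtype.ext
      show a + ((b : ℕ) - a) = (b : ℕ)
      omega
    rw [hf]
    simp only
    rw [ichoose_eq_zero_of_lt (by omega)]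
    simp
  have hcomp : (f ∘ ι) = fun k : ℕ =>
      (((k + (a - 1)).choose (a - 1) : ℕ) : ℝ) * ((1 - v) * r) ^ k * (v ^ a * r ^ a) := by
    funext k
    have h1 : ((ι k : ℕ)) = a + k := rfl
    simp only [Function.comp_apply, hf, h1]
    rw [ichoose_cast ha (by omega)]
    have h2 : a + k - 1 = k + (a - 1) := by omega
    have h3 : a + k - a = k := by omega
    rw [h2, h3, pow_add, mul_pow]
    ring
  have hgeom := (hasSum_choose_mul_geometric_of_norm_lt_one (a - 1) hs1).mul_right
    (v ^ a * r ^ a)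
  have ha1 : a - 1 + 1 = a := by omega
  rw [ha1] at hgeom
  have hval : 1 / (1 - (1 - v) * r) ^ a * (v ^ a * r ^ a)
      = (v * r / (1 - (1 - v) * r)) ^ a := by
    rw [div_pow, mul_pow]
    field_simp
  rw [hval] at hgeom
  refine (hinj.hasSum_iff hvanish).mp ?_
  rwa [hcomp]

def chainW (υ : ℕ → ℝ) (x0 m : ℕ) (xb : ℕ → ℕ) : ℝ :=
  ∏ i ∈ Finset.range m,
    (ichoose ((xb i : ℤ) - 1) ((prevx x0 xb i : ℤ) - 1) * υ i ^ (prevx x0 xb i)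
      * (1 - υ i) ^ (xb i - prevx x0 xb i))

def chainT (υ : ℕ → ℝ) (r : ℝ) (x0 m : ℕ) (x : Fin m → ℕ+) : ℝ :=
  chainW υ x0 m (xbar m x) * r ^ (prevx x0 (xbar m x) m)

lemma chainW_nonneg {υ : ℕ → ℝ} {m : ℕ} (hυ : ∀ i < m, 0 ≤ υ i ∧ υ i ≤ 1)
    (x0 : ℕ) (xb : ℕ → ℕ) : 0 ≤ chainW υ x0 m xb := by
  refine Finset.prod_nonneg fun i hi => ?_
  rw [Finset.mem_range] at hi
  have h1 := (hυ i hi).1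
  have h2 := (hυ i hi).2
  have h3 := ichoose_nonneg ((xb i : ℤ) - 1) ((prevx x0 xb i : ℤ) - 1)
  have h4 : (0:ℝ) ≤ 1 - υ i := by linarith
  positivity

lemma chainT_nonneg {υ : ℕ → ℝ} {m : ℕ} (hυ : ∀ i < m, 0 ≤ υ i ∧ υ i ≤ 1)
    {r : ℝ} (hr : 0 ≤ r) (x0 : ℕ) (x : Fin m → ℕ+) : 0 ≤ chainT υ r x0 m x :=
  mul_nonneg (chainW_nonneg hυ x0 _) (pow_nonneg hr _)

lemma chainT_snoc (υ : ℕ → ℝ) (r : ℝ) (x0 m : ℕ) (z : Fin m → ℕ+) (b : ℕ+) :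
    chainT υ r x0 (m + 1) (Fin.snoc z b) =
      chainW υ x0 m (xbar m z) *
        (ichoose (((b : ℕ) : ℤ) - 1) ((prevx x0 (xbar m z) m : ℤ) - 1)
          * υ m ^ (prevx x0 (xbar m z) m) * (1 - υ m) ^ ((b : ℕ) - prevx x0 (xbar m z) m)
          * r ^ (b : ℕ)) := by
  unfold chainT chainW
  rw [Finset.prod_range_succ, prevx_snoc_succ z b, xbar_snoc_last z b, prevx_snoc_m z b]
  have hprod : ∀ i ∈ Finset.range m,
      (ichoose ((xbar (m+1) (Fin.snoc z b) i : ℤ) - 1)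
          ((prevx x0 (xbar (m+1) (Fin.snoc z b)) i : ℤ) - 1)
        * υ i ^ prevx x0 (xbar (m+1) (Fin.snoc z b)) i
        * (1 - υ i) ^ (xbar (m+1) (Fin.snoc z b) i - prevx x0 (xbar (m+1) (Fin.snoc z b)) i))
      = (ichoose ((xbar m z i : ℤ) - 1) ((prevx x0 (xbar m z) i : ℤ) - 1)
        * υ i ^ prevx x0 (xbar m z) i
        * (1 - υ i) ^ (xbar m z i - prevx x0 (xbar m z) i)) := by
    intro i hi
    rw [Finset.mem_range] at hi
    rw [xbar_snoc_lt z b hi, prevx_snoc_lt z b hi]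
  rw [Finset.prod_congr rfl hprod]
  ring

lemma chain_summable : ∀ (m : ℕ) (υ : ℕ → ℝ), (∀ i < m, 0 < υ i ∧ υ i < 1) →
    ∀ (r : ℝ), 0 < r → r * (1 - ∏ i ∈ Finset.range m, υ i) < 1 →
    ∀ x0 : ℕ, 1 ≤ x0 → Summable (fun x : Fin m → ℕ+ => chainT υ r x0 m x) := by
  intro m
  induction m with
  | zero =>
    intro υ _ r _ _ x0 _
    haveI : Unique (Fin 0 → ℕ+) := Pi.uniqueOfIsEmpty _
    exact (hasSum_unique _).summable
  | succ m IH =>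
    intro υ hυ r hr hcond x0 hx0
    have hυm := hυ m (Nat.lt_succ_self m)
    have hP0 : 0 < ∏ i ∈ Finset.range m, υ i :=
      Finset.prod_pos fun i hi => (hυ i (by simp at hi; omega)).1
    have hP1 : ∏ i ∈ Finset.range m, υ i ≤ 1 :=
      Finset.prod_le_one (fun i hi => le_of_lt (hυ i (by simp at hi; omega)).1)
        (fun i hi => le_of_lt (hυ i (by simp at hi; omega)).2)
    set P := ∏ i ∈ Finset.range m, υ i with hP
    have hcond' : r * (1 - P * υ m) < 1 := by
      rwa [Finset.prod_range_succ] at hcond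
    have hPv : P * υ m ≤ υ m := mul_le_of_le_one_left hυm.1.le hP1
    have hwr : (1 - υ m) * r < 1 := by
      nlinarith [mul_nonneg (sub_nonneg.mpr hPv) hr.le]
    have hden : 0 < 1 - (1 - υ m) * r := by linarith
    have hr'0 : 0 < υ m * r / (1 - (1 - υ m) * r) := div_pos (mul_pos hυm.1 hr) hden
    have hcondIH : (υ m * r / (1 - (1 - υ m) * r)) * (1 - P) < 1 := by
      rw [div_mul_eq_mul_div, div_lt_one hden]
      nlinarith [hcond']
    set e : ((Fin m → ℕ+) × ℕ+) ≃ (Fin (m + 1) → ℕ+) :=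
      (Equiv.prodComm _ _).trans (Fin.snocEquiv (fun _ => ℕ+)) with he_def
    have he : ∀ (z : Fin m → ℕ+) (b : ℕ+), e (z, b) = Fin.snoc z b := by
      intro z b
      rfl
    rw [← e.summable_iff]
    have hfun : ((fun x : Fin (m + 1) → ℕ+ => chainT υ r x0 (m + 1) x) ∘ e)
        = fun zb : (Fin m → ℕ+) × ℕ+ =>
            chainW υ x0 m (xbar m zb.1) *
              (ichoose (((zb.2 : ℕ) : ℤ) - 1) ((prevx x0 (xbar m zb.1) m : ℤ) - 1)
                * υ m ^ (prevx x0 (xbar m zb.1) m)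
                * (1 - υ m) ^ ((zb.2 : ℕ) - prevx x0 (xbar m zb.1) m)
                * r ^ (zb.2 : ℕ)) := by
      funext zb
      rw [Function.comp_apply, he zb.1 zb.2]
      exact chainT_snoc υ r x0 m zb.1 zb.2
    rw [hfun]
    have hυ' : ∀ i < m, 0 ≤ υ i ∧ υ i ≤ 1 := fun i hi =>
      ⟨le_of_lt (hυ i (by omega)).1, le_of_lt (hυ i (by omega)).2⟩
    have hnn : ∀ zb : (Fin m → ℕ+) × ℕ+, (0:ℝ) ≤
        chainW υ x0 m (xbar m zb.1) *
          (ichoose (((zb.2 : ℕ) : ℤ) - 1) ((prevx x0 (xbar m zb.1) m : ℤ) - 1)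
            * υ m ^ (prevx x0 (xbar m zb.1) m)
            * (1 - υ m) ^ ((zb.2 : ℕ) - prevx x0 (xbar m zb.1) m)
            * r ^ (zb.2 : ℕ)) := by
      intro zb
      have h1 := chainW_nonneg hυ' x0 (xbar m zb.1)
      have h2 := ichoose_nonneg (((zb.2 : ℕ) : ℤ) - 1) ((prevx x0 (xbar m zb.1) m : ℤ) - 1)
      have h3 : (0:ℝ) ≤ 1 - υ m := by linarith [hυm.2]
      have h4 := le_of_lt hυm.1
      have h5 := le_of_lt hr
      positivity
    refine (summable_prod_of_nonneg (fun zb => hnn zb)).mpr ⟨?_, ?_⟩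
    · intro z
      have hs := ((negbin_hasSum hυm.1 hυm.2 hr hwr (prevx_pos hx0 m z m)).mul_left
        (chainW υ x0 m (xbar m z))).summable
      exact hs
    · have htsum : (fun z : Fin m → ℕ+ => ∑' b : ℕ+,
          chainW υ x0 m (xbar m z) *
            (ichoose (((b : ℕ) : ℤ) - 1) ((prevx x0 (xbar m z) m : ℤ) - 1)
              * υ m ^ (prevx x0 (xbar m z) m)
              * (1 - υ m) ^ ((b : ℕ) - prevx x0 (xbar m z) m)
              * r ^ (b : ℕ)))
          = fun z => chainT υ (υ m * r / (1 - (1 - υ m) * r)) x0 m z := by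
        funext z
        rw [((negbin_hasSum hυm.1 hυm.2 hr hwr (prevx_pos hx0 m z m)).mul_left
          (chainW υ x0 m (xbar m z))).tsum_eq]
        rfl
      rw [htsum]
      exact IH υ (fun i hi => hυ i (by omega)) _ hr'0 hcondIH x0 hx0

/-- Derivative of `υ^a (1-υ)^b` where `υ = exp(-ν d)`. -/
lemma hasDerivAt_core {d μ : ℝ} (hd : 0 < d) (hμ : 0 < μ) (a b : ℕ) (ha : 1 ≤ a) :
    HasDerivAt (fun ν => Real.exp (-ν * d) ^ a * (1 - Real.exp (-ν * d)) ^ b)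
      (d * ((((a : ℝ) + (b : ℝ)) * Real.exp (-μ * d) - (a : ℝ)) / (1 - Real.exp (-μ * d)))
        * (Real.exp (-μ * d) ^ a * (1 - Real.exp (-μ * d)) ^ b)) μ := by
  have h1 : HasDerivAt (fun ν : ℝ => -ν * d) (-1 * d) μ := (hasDerivAt_id μ).neg.mul_const d
  have hE : HasDerivAt (fun ν : ℝ => Real.exp (-ν * d)) (Real.exp (-μ * d) * (-1 * d)) μ :=
    h1.exp
  have hA := hE.pow a
  have hB := ((hasDerivAt_const μ (1 : ℝ)).sub hE).pow b
  have hAB := hA.mul hB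
  refine hAB.congr_deriv (Eq.symm ?_)
  simp only [Pi.pow_apply, Pi.sub_apply]
  have hE0 : 0 < Real.exp (-μ * d) := Real.exp_pos _
  have hE1 : Real.exp (-μ * d) < 1 := by
    rw [Real.exp_lt_one_iff]
    nlinarith
  have h1E : (0 : ℝ) < 1 - Real.exp (-μ * d) := by linarith
  obtain ⟨a', rfl⟩ : ∃ a', a = a' + 1 := ⟨a - 1, by omega⟩
  rw [← mul_div_assoc, div_mul_eq_mul_div, div_eq_iff h1E.ne']
  simp only [Nat.add_sub_cancel]
  cases b with
  | zero =>
    push_cast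
    ring
  | succ b' =>
    simp only [Nat.add_sub_cancel]
    push_cast
    ring

/-- A binomial probability is at most 1. -/
lemma detect_le_one {p : ℝ} (hp0 : 0 ≤ p) (hp1 : p ≤ 1) {yv xv : ℕ} (h : yv ≤ xv) :
    ichoose (xv : ℤ) (yv : ℤ) * p ^ yv * (1 - p) ^ (xv - yv) ≤ 1 := by
  have hq : (0:ℝ) ≤ 1 - p := by linarith
  have hich : ichoose (xv : ℤ) (yv : ℤ) = ((xv.choose yv : ℕ) : ℝ) := by
    unfold ichoose
    rw [if_pos (by omega)]
    simp
  rw [hich]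
  have hsingle : p ^ yv * (1 - p) ^ (xv - yv) * ((xv.choose yv : ℕ) : ℝ)
      ≤ ∑ k ∈ Finset.range (xv + 1), p ^ k * (1 - p) ^ (xv - k) * ((xv.choose k : ℕ) : ℝ) :=
    Finset.single_le_sum (f := fun k => p ^ k * (1 - p) ^ (xv - k) * ((xv.choose k : ℕ) : ℝ))
      (fun k _ => by positivity) (Finset.mem_range.mpr (by omega))
  have hsum : ∑ k ∈ Finset.range (xv + 1), p ^ k * (1 - p) ^ (xv - k) * ((xv.choose k : ℕ) : ℝ)
      = 1 := by
    rw [← add_pow]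
    norm_num
  calc ((xv.choose yv : ℕ) : ℝ) * p ^ yv * (1 - p) ^ (xv - yv)
      = p ^ yv * (1 - p) ^ (xv - yv) * ((xv.choose yv : ℕ) : ℝ) := by ring
    _ ≤ _ := hsingle
    _ = 1 := hsum

/-- Derivative of one factor of the POPBP likelihood term. -/
lemma hasDerivAt_factor (p : ℝ) (t : ℕ → ℝ) (x0 : ℕ) (yb xb : ℕ → ℕ) (i : ℕ)
    (hd : 0 < t (i + 1) - t i) {μ : ℝ} (hμ : 0 < μ) (hP : 1 ≤ prevx x0 xb i)
    (hsupp : prevx x0 xb i ≤ xb i) :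
    HasDerivAt (fun ν =>
        ichoose (xb i : ℤ) (yb i : ℤ) * p ^ (yb i) * (1 - p) ^ (xb i - yb i) *
          ichoose ((xb i : ℤ) - 1) ((prevx x0 xb i : ℤ) - 1) *
          upsRate ν t i ^ (prevx x0 xb i) * (1 - upsRate ν t i) ^ (xb i - prevx x0 xb i))
      ((t (i + 1) - t i) *
          (((xb i : ℝ) * upsRate μ t i - (prevx x0 xb i : ℝ)) / (1 - upsRate μ t i))
        * (ichoose (xb i : ℤ) (yb i : ℤ) * p ^ (yb i) * (1 - p) ^ (xb i - yb i) *
          ichoose ((xb i : ℤ) - 1) ((prevx x0 xb i : ℤ) - 1) *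
          upsRate μ t i ^ (prevx x0 xb i) * (1 - upsRate μ t i) ^ (xb i - prevx x0 xb i))) μ := by
  have hcast : ((prevx x0 xb i : ℝ) + ((xb i - prevx x0 xb i : ℕ) : ℝ)) = (xb i : ℝ) := by
    push_cast [hsupp]
    ring
  have hcore := hasDerivAt_core hd hμ (prevx x0 xb i) (xb i - prevx x0 xb i) hP
  have h := hcore.const_mul (ichoose (xb i : ℤ) (yb i : ℤ) * p ^ (yb i) * (1 - p) ^ (xb i - yb i) *
    ichoose ((xb i : ℤ) - 1) ((prevx x0 xb i : ℤ) - 1))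
  have hfun : (fun ν : ℝ => ichoose (xb i : ℤ) (yb i : ℤ) * p ^ (yb i) * (1 - p) ^ (xb i - yb i) *
        ichoose ((xb i : ℤ) - 1) ((prevx x0 xb i : ℤ) - 1) *
        (Real.exp (-ν * (t (i + 1) - t i)) ^ (prevx x0 xb i) *
          (1 - Real.exp (-ν * (t (i + 1) - t i))) ^ (xb i - prevx x0 xb i)))
      = fun ν : ℝ => ichoose (xb i : ℤ) (yb i : ℤ) * p ^ (yb i) * (1 - p) ^ (xb i - yb i) *
        ichoose ((xb i : ℤ) - 1) ((prevx x0 xb i : ℤ) - 1) *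
        upsRate ν t i ^ (prevx x0 xb i) * (1 - upsRate ν t i) ^ (xb i - prevx x0 xb i) := by
    funext ν
    rw [upsRate]
    ring
  rw [hfun] at h
  refine h.congr_deriv (Eq.symm ?_)
  rw [upsRate, ← hcast]
  ring

/-- Derivative of the whole POPBP likelihood summand. -/
lemma hasDerivAt_popbpF (n : ℕ) (p : ℝ) (t : ℕ → ℝ) (x0 : ℕ) (hx0 : 1 ≤ x0)
    (hd : ∀ i < n, 0 < t (i + 1) - t i) (y : Fin n → ℕ) (x : Fin n → ℕ+)
    {ν : ℝ} (hν : 0 < ν) :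
    HasDerivAt (fun μ => popbpTerm n p (upsRate μ t) x0 (extFin n y 0) (xbar n x))
      ((∑ j ∈ Finset.range n, (t (j + 1) - t j) *
          (((xbar n x j : ℝ) * upsRate ν t j - (prevx x0 (xbar n x) j : ℝ)) /
            (1 - upsRate ν t j))) *
        popbpTerm n p (upsRate ν t) x0 (extFin n y 0) (xbar n x)) ν := by
  by_cases hsupp : ∀ i < n, prevx x0 (xbar n x) i ≤ xbar n x i
  · have hfac : ∀ i ∈ Finset.range n, HasDerivAt
        (fun μ : ℝ =>
          ichoose (xbar n x i : ℤ) (extFin n y 0 i : ℤ) * p ^ (extFin n y 0 i) *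
            (1 - p) ^ (xbar n x i - extFin n y 0 i) *
            ichoose ((xbar n x i : ℤ) - 1) ((prevx x0 (xbar n x) i : ℤ) - 1) *
            upsRate μ t i ^ (prevx x0 (xbar n x) i) *
            (1 - upsRate μ t i) ^ (xbar n x i - prevx x0 (xbar n x) i))
        ((t (i + 1) - t i) *
            (((xbar n x i : ℝ) * upsRate ν t i - (prevx x0 (xbar n x) i : ℝ)) /
              (1 - upsRate ν t i)) *
          (ichoose (xbar n x i : ℤ) (extFin n y 0 i : ℤ) * p ^ (extFin n y 0 i) *
            (1 - p) ^ (xbar n x i - extFin n y 0 i) *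
            ichoose ((xbar n x i : ℤ) - 1) ((prevx x0 (xbar n x) i : ℤ) - 1) *
            upsRate ν t i ^ (prevx x0 (xbar n x) i) *
            (1 - upsRate ν t i) ^ (xbar n x i - prevx x0 (xbar n x) i))) ν := by
      intro i hi
      rw [Finset.mem_range] at hi
      exact hasDerivAt_factor p t x0 (extFin n y 0) (xbar n x) i (hd i hi) hν
        (prevx_pos hx0 n x i) (hsupp i hi)
    have h := HasDerivAt.finset_prod hfac
    have hval : ∑ i ∈ Finset.range n,
          (∏ j ∈ (Finset.range n).erase i,
            (ichoose (xbar n x j : ℤ) (extFin n y 0 j : ℤ) * p ^ (extFin n y 0 j) *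
              (1 - p) ^ (xbar n x j - extFin n y 0 j) *
              ichoose ((xbar n x j : ℤ) - 1) ((prevx x0 (xbar n x) j : ℤ) - 1) *
              upsRate ν t j ^ (prevx x0 (xbar n x) j) *
              (1 - upsRate ν t j) ^ (xbar n x j - prevx x0 (xbar n x) j))) •
          ((t (i + 1) - t i) *
              (((xbar n x i : ℝ) * upsRate ν t i - (prevx x0 (xbar n x) i : ℝ)) /
                (1 - upsRate ν t i)) *
            (ichoose (xbar n x i : ℤ) (extFin n y 0 i : ℤ) * p ^ (extFin n y 0 i) *
              (1 - p) ^ (xbar n x i - extFin n y 0 i) *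
              ichoose ((xbar n x i : ℤ) - 1) ((prevx x0 (xbar n x) i : ℤ) - 1) *
              upsRate ν t i ^ (prevx x0 (xbar n x) i) *
              (1 - upsRate ν t i) ^ (xbar n x i - prevx x0 (xbar n x) i)))
        = (∑ j ∈ Finset.range n, (t (j + 1) - t j) *
            (((xbar n x j : ℝ) * upsRate ν t j - (prevx x0 (xbar n x) j : ℝ)) /
              (1 - upsRate ν t j))) *
          popbpTerm n p (upsRate ν t) x0 (extFin n y 0) (xbar n x) := by
      rw [Finset.sum_mul]
      refine Finset.sum_congr rfl fun i hi => ?_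
      rw [smul_eq_mul]
      unfold popbpTerm
      rw [← Finset.prod_erase_mul _ _ hi]
      ring
    rw [hval, Finset.prod_fn] at h
    exact h
  · push_neg at hsupp
    obtain ⟨i, hi, hviol⟩ := hsupp
    have hzero : ∀ μ : ℝ, popbpTerm n p (upsRate μ t) x0 (extFin n y 0) (xbar n x) = 0 := by
      intro μ
      unfold popbpTerm
      apply Finset.prod_eq_zero (Finset.mem_range.mpr hi)
      rw [ichoose_eq_zero_of_lt
        (show (xbar n x i : ℤ) - 1 < (prevx x0 (xbar n x) i : ℤ) - 1 by omega)]
      simp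
    have hF0 : (fun μ : ℝ => popbpTerm n p (upsRate μ t) x0 (extFin n y 0) (xbar n x))
        = fun _ => (0:ℝ) := funext hzero
    rw [hF0, hzero ν, mul_zero]
    exact hasDerivAt_const ν 0

lemma pow_bound {ν μ₁ μ₂ d T ε : ℝ} (hμ₁ : 0 < μ₁) (hν₁ : μ₁ ≤ ν) (hν₂ : ν ≤ μ₂)
    (hμ₂ : μ₂ = μ₁ + 2 * ε) (hε : 0 ≤ ε) (hd : 0 < d) (hdT : d ≤ T)
    (a b M : ℕ) (haM : a ≤ M) :
    Real.exp (-ν * d) ^ a * (1 - Real.exp (-ν * d)) ^ b ≤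
      Real.exp (-μ₂ * d) ^ a * (1 - Real.exp (-μ₂ * d)) ^ b * Real.exp (2 * ε * T * (M : ℝ)) := by
  have hμ₂0 : 0 < μ₂ := by linarith
  have hT : 0 < T := lt_of_lt_of_le hd hdT
  have hE2a : (0:ℝ) ≤ 1 - Real.exp (-μ₂ * d) := by
    have h := Real.exp_le_one_iff.mpr (show -μ₂ * d ≤ 0 by nlinarith)
    linarith
  have hEν1 : (0:ℝ) ≤ 1 - Real.exp (-ν * d) := by
    have h := Real.exp_le_one_iff.mpr (show -ν * d ≤ 0 by nlinarith)
    linarith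
  have h3 : (1 - Real.exp (-ν * d)) ^ b ≤ (1 - Real.exp (-μ₂ * d)) ^ b := by
    apply pow_le_pow_left₀ hEν1
    have h := Real.exp_le_exp.mpr (show -μ₂ * d ≤ -ν * d by nlinarith)
    linarith
  have h1 : Real.exp (-ν * d) ^ a ≤ Real.exp (-μ₂ * d) ^ a * Real.exp (2 * ε * d) ^ a := by
    rw [← mul_pow]
    apply pow_le_pow_left₀ (Real.exp_nonneg _)
    rw [← Real.exp_add]
    apply Real.exp_le_exp.mpr
    nlinarith
  have h2 : Real.exp (2 * ε * d) ^ a ≤ Real.exp (2 * ε * T * (M : ℝ)) := by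
    rw [← Real.exp_nat_mul]
    apply Real.exp_le_exp.mpr
    have haM' : (a : ℝ) ≤ (M : ℝ) := Nat.cast_le.mpr haM
    have ha0 : (0:ℝ) ≤ (a : ℝ) := Nat.cast_nonneg a
    nlinarith [mul_le_mul hdT haM' ha0 hT.le]
  calc Real.exp (-ν * d) ^ a * (1 - Real.exp (-ν * d)) ^ b
      ≤ (Real.exp (-μ₂ * d) ^ a * Real.exp (2 * ε * d) ^ a) * (1 - Real.exp (-μ₂ * d)) ^ b := by
        apply mul_le_mul h1 h3 (pow_nonneg hEν1 b) (by positivity)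
    _ = (Real.exp (-μ₂ * d) ^ a * (1 - Real.exp (-μ₂ * d)) ^ b) * Real.exp (2 * ε * d) ^ a := by
        ring
    _ ≤ (Real.exp (-μ₂ * d) ^ a * (1 - Real.exp (-μ₂ * d)) ^ b)
          * Real.exp (2 * ε * T * (M : ℝ)) := by
        apply mul_le_mul_of_nonneg_left h2 (mul_nonneg (by positivity) (pow_nonneg hE2a b))

lemma coeff_term_bound {ν μ₁ d : ℝ} (hμ₁ : 0 < μ₁) (hν : μ₁ ≤ ν) (hd : 0 < d)
    (X P M : ℕ) (hX : X ≤ M) (hP : P ≤ M) :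
    |d * (((X : ℝ) * Real.exp (-ν * d) - (P : ℝ)) / (1 - Real.exp (-ν * d)))| ≤
      2 * d / (1 - Real.exp (-μ₁ * d)) * (M : ℝ) := by
  have hE1 : Real.exp (-ν * d) < 1 := by rw [Real.exp_lt_one_iff]; nlinarith
  have hE0 : 0 < Real.exp (-ν * d) := Real.exp_pos _
  have hden : 0 < 1 - Real.exp (-ν * d) := by linarith
  have hdenα : 0 < 1 - Real.exp (-μ₁ * d) := by
    have h : Real.exp (-μ₁ * d) < 1 := by rw [Real.exp_lt_one_iff]; nlinarith
    linarith
  have hdenle : 1 - Real.exp (-μ₁ * d) ≤ 1 - Real.exp (-ν * d) := by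
    have h : Real.exp (-ν * d) ≤ Real.exp (-μ₁ * d) := by
      apply Real.exp_le_exp.mpr; nlinarith
    linarith
  have hX' : (X:ℝ) ≤ (M:ℝ) := Nat.cast_le.mpr hX
  have hP' : (P:ℝ) ≤ (M:ℝ) := Nat.cast_le.mpr hP
  have hX0 : (0:ℝ) ≤ (X:ℝ) := Nat.cast_nonneg X
  have hP0 : (0:ℝ) ≤ (P:ℝ) := Nat.cast_nonneg P
  have hM0 : (0:ℝ) ≤ (M:ℝ) := Nat.cast_nonneg M
  have hnum : |(X:ℝ) * Real.exp (-ν * d) - (P:ℝ)| ≤ 2 * (M:ℝ) := by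
    rw [abs_le]
    constructor
    · nlinarith [mul_nonneg hX0 hE0.le]
    · nlinarith [mul_le_of_le_one_right hX0 hE1.le]
  calc |d * (((X : ℝ) * Real.exp (-ν * d) - (P : ℝ)) / (1 - Real.exp (-ν * d)))|
      = d * (|(X : ℝ) * Real.exp (-ν * d) - (P : ℝ)| / (1 - Real.exp (-ν * d))) := by
        rw [abs_mul, abs_of_pos hd, abs_div, abs_of_pos hden]
    _ ≤ d * (2 * (M:ℝ) / (1 - Real.exp (-μ₁ * d))) := by
        refine mul_le_mul_of_nonneg_left ?_ hd.le
        exact div_le_div₀ (by positivity) hnum hdenα hdenle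
    _ = 2 * d / (1 - Real.exp (-μ₁ * d)) * (M : ℝ) := by ring

end PopbpAux

set_option maxHeartbeats 2000000 in
/-- The map `λ ↦ L(x_0, y_1, …, y_n)` is differentiable on `(0, ∞)` and its
derivative is the absolutely convergent series
`Σ_{(x_1,…,x_n) ∈ (ℕ∖{0})^n} Σ_{j=1}^{n} (t_j - t_{j-1}) ((x_j υ_{j-1} - x_{j-1})/(1 - υ_{j-1}))`
times the likelihood summand. -/
theorem popbp_likelihood_deriv
    (n : ℕ) (hn : 1 ≤ n) (p : ℝ) (hp : p ∈ Set.Icc (0 : ℝ) 1)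
    (x0 : ℕ) (hx0 : 1 ≤ x0)
    (t : ℕ → ℝ) (ht0 : t 0 = 0) (ht : ∀ i < n, t i < t (i + 1))
    (y : Fin n → ℕ) :
    ∀ lam : ℝ, 0 < lam →
      Summable (fun x : Fin n → ℕ+ =>
        |(∑ j ∈ Finset.range n, (t (j + 1) - t j) *
            (((xbar n x j : ℝ) * upsRate lam t j - (prevx x0 (xbar n x) j : ℝ)) /
              (1 - upsRate lam t j))) *
          popbpTerm n p (upsRate lam t) x0 (extFin n y 0) (xbar n x)|) ∧
      HasDerivAt (fun μ => popbpL n p (upsRate μ t) x0 y)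
        (∑' x : Fin n → ℕ+,
          (∑ j ∈ Finset.range n, (t (j + 1) - t j) *
              (((xbar n x j : ℝ) * upsRate lam t j - (prevx x0 (xbar n x) j : ℝ)) /
                (1 - upsRate lam t j))) *
            popbpTerm n p (upsRate lam t) x0 (extFin n y 0) (xbar n x)) lam := by
  obtain ⟨hp0, hp1⟩ := hp
  intro lam hlam
  -- monotonicity facts about t
  have htmono : ∀ j, j ≤ n → ∀ i, i ≤ j → t i ≤ t j := by
    intro j
    induction j with
    | zero =>
      intro _ i hi
      have h : i = 0 := by omega
      rw [h]
    | succ j IHj =>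
      intro hj i hi
      rcases Nat.lt_or_ge i (j + 1) with h | h
      · exact (IHj (by omega) i (by omega)).trans (le_of_lt (ht j (by omega)))
      · have h2 : i = j + 1 := by omega
        rw [h2]
  have ht0le : ∀ i, i ≤ n → 0 ≤ t i := by
    intro i hi
    have h := htmono i hi 0 (by omega)
    rwa [ht0] at h
  have htn : 0 < t n := by
    have h0 := ht 0 (by omega)
    have h1 := htmono n le_rfl 1 hn
    rw [ht0] at h0
    linarith
  have hd : ∀ i < n, 0 < t (i + 1) - t i := fun i hi => by linarith [ht i hi]
  have hdle : ∀ i < n, t (i + 1) - t i ≤ t n := by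
    intro i hi
    have h1 := htmono n le_rfl (i + 1) (by omega)
    have h2 := ht0le i (by omega)
    linarith
  -- choice of ε
  obtain ⟨ε, hε0, hεlam, hφ⟩ : ∃ ε : ℝ, 0 < ε ∧ ε < lam ∧
      Real.exp ((2 * (n : ℝ) + 1) * ε * t n) * (1 - Real.exp (-(lam + ε) * t n)) < 1 := by
    have hcont : ContinuousAt
        (fun e : ℝ => Real.exp ((2 * (n : ℝ) + 1) * e * t n) *
          (1 - Real.exp (-(lam + e) * t n))) 0 := by fun_prop
    have hlt : (fun e : ℝ => Real.exp ((2 * (n : ℝ) + 1) * e * t n) *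
        (1 - Real.exp (-(lam + e) * t n))) 0 < 1 := by
      have h1 : (2 * (n : ℝ) + 1) * 0 * t n = 0 := by ring
      have h2 : lam + 0 = lam := by ring
      simp only [h1, h2, Real.exp_zero, one_mul]
      linarith [Real.exp_pos (-lam * t n)]
    have hev := hcont.eventually_lt continuousAt_const hlt
    rw [Metric.eventually_nhds_iff] at hev
    obtain ⟨δ, hδ0, hδ⟩ := hev
    have hmin0 : 0 < min (δ / 2) (lam / 2) := lt_min (by linarith) (by linarith)
    refine ⟨min (δ / 2) (lam / 2), hmin0, ?_, ?_⟩
    · calc min (δ / 2) (lam / 2) ≤ lam / 2 := min_le_right _ _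
        _ < lam := by linarith
    · apply hδ
      rw [Real.dist_eq, sub_zero, abs_of_pos hmin0]
      calc min (δ / 2) (lam / 2) ≤ δ / 2 := min_le_left _ _
        _ < δ := by linarith
  have hμ₁ : 0 < lam - ε := by linarith
  -- the dominating chain parameters
  have hυα : ∀ i < n, 0 < upsRate (lam + ε) t i ∧ upsRate (lam + ε) t i < 1 := by
    intro i hi
    refine ⟨Real.exp_pos _, ?_⟩
    rw [upsRate, Real.exp_lt_one_iff]
    nlinarith [hd i hi]
  have hαnonneg : ∀ i < n, 0 ≤ upsRate (lam + ε) t i ∧ upsRate (lam + ε) t i ≤ 1 :=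
    fun i hi => ⟨(hυα i hi).1.le, (hυα i hi).2.le⟩
  have hprodα : ∏ i ∈ Finset.range n, upsRate (lam + ε) t i
      = Real.exp (-(lam + ε) * t n) := by
    have h1 : ∏ i ∈ Finset.range n, upsRate (lam + ε) t i
        = Real.exp (∑ i ∈ Finset.range n, -(lam + ε) * (t (i + 1) - t i)) := by
      rw [Real.exp_sum]
      rfl
    rw [h1]
    congr 1
    rw [← Finset.mul_sum, Finset.sum_range_sub (f := t), ht0]
    ring
  have hr2pos : (0:ℝ) < Real.exp ((2 * (n : ℝ) + 1) * ε * t n) := Real.exp_pos _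
  have hcond : Real.exp ((2 * (n : ℝ) + 1) * ε * t n) *
      (1 - ∏ i ∈ Finset.range n, upsRate (lam + ε) t i) < 1 := by
    rw [hprodα]; exact hφ
  have hchain : Summable (fun x : Fin n → ℕ+ =>
      chainT (upsRate (lam + ε) t) (Real.exp ((2 * (n : ℝ) + 1) * ε * t n)) x0 n x) :=
    chain_summable n (upsRate (lam + ε) t) hυα _ hr2pos hcond x0 hx0
  -- geometric absorption constant K₂
  obtain ⟨K₂, hK₂⟩ : ∃ K₂ : ℝ, ∀ m : ℕ, (m : ℝ) * Real.exp (-(ε * t n)) ^ m ≤ K₂ := by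
    have hχ : ‖Real.exp (-(ε * t n))‖ < 1 := by
      rw [Real.norm_eq_abs, abs_of_pos (Real.exp_pos _), Real.exp_lt_one_iff]
      nlinarith
    have hsum : Summable (fun m : ℕ => (m : ℝ) ^ 1 * Real.exp (-(ε * t n)) ^ m) :=
      summable_pow_mul_geometric_of_norm_lt_one 1 hχ
    obtain ⟨K₂, hK₂⟩ := hsum.tendsto_atTop_zero.bddAbove_range
    refine ⟨K₂, fun m => ?_⟩
    have h := hK₂ ⟨m, rfl⟩
    simpa using h
  have hK₂0 : 0 ≤ K₂ := by
    have h := hK₂ 0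
    norm_num at h
    exact h
  have hr1r2 : Real.exp (-(ε * t n)) * Real.exp ((2 * (n : ℝ) + 1) * ε * t n)
      = Real.exp (2 * (n : ℝ) * ε * t n) := by
    rw [← Real.exp_add]
    congr 1
    ring
  have hr1pos : (0:ℝ) < Real.exp (2 * (n : ℝ) * ε * t n) := Real.exp_pos _
  have hr12 : Real.exp (2 * (n : ℝ) * ε * t n) ≤ Real.exp ((2 * (n : ℝ) + 1) * ε * t n) := by
    apply Real.exp_le_exp.mpr
    nlinarith [htn, hε0]
  -- coefficient constant K₁
  have hdenα : ∀ j < n, 0 < 1 - Real.exp (-(lam - ε) * (t (j + 1) - t j)) := by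
    intro j hj
    have h1 := hd j hj
    have h2 : Real.exp (-(lam - ε) * (t (j + 1) - t j)) < 1 := by
      rw [Real.exp_lt_one_iff]
      nlinarith
    linarith
  have hK₁0 : 0 ≤ ∑ j ∈ Finset.range n,
      2 * (t (j + 1) - t j) / (1 - Real.exp (-(lam - ε) * (t (j + 1) - t j))) := by
    refine Finset.sum_nonneg fun j hj => ?_
    rw [Finset.mem_range] at hj
    have h1 := hdenα j hj
    have h2 := hd j hj
    positivity
  set K₁ : ℝ := ∑ j ∈ Finset.range n,
    2 * (t (j + 1) - t j) / (1 - Real.exp (-(lam - ε) * (t (j + 1) - t j))) with hK₁def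
  set C : ℝ := (K₁ + 1) * (K₂ + 1) with hCdef
  have hC1 : 1 ≤ C := by nlinarith
  have hK₁K₂C : K₁ * K₂ ≤ C := by nlinarith
  have hchainTnn : ∀ x : Fin n → ℕ+, 0 ≤ chainT (upsRate (lam + ε) t)
      (Real.exp ((2 * (n : ℝ) + 1) * ε * t n)) x0 n x :=
    fun x => chainT_nonneg hαnonneg hr2pos.le x0 x
  have hunn : ∀ x : Fin n → ℕ+, 0 ≤ C * chainT (upsRate (lam + ε) t)
      (Real.exp ((2 * (n : ℝ) + 1) * ε * t n)) x0 n x :=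
    fun x => mul_nonneg (by linarith) (hchainTnn x)
  have hu : Summable (fun x : Fin n → ℕ+ => C * chainT (upsRate (lam + ε) t)
      (Real.exp ((2 * (n : ℝ) + 1) * ε * t n)) x0 n x) := hchain.mul_left C
  -- central pointwise bounds
  have hkey : ∀ x : Fin n → ℕ+, ∀ ν : ℝ, lam - ε ≤ ν → ν ≤ lam + ε →
      0 ≤ popbpTerm n p (upsRate ν t) x0 (extFin n y 0) (xbar n x) ∧
      popbpTerm n p (upsRate ν t) x0 (extFin n y 0) (xbar n x) ≤
        C * chainT (upsRate (lam + ε) t) (Real.exp ((2 * (n : ℝ) + 1) * ε * t n)) x0 n x ∧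
      |(∑ j ∈ Finset.range n, (t (j + 1) - t j) *
          (((xbar n x j : ℝ) * upsRate ν t j - (prevx x0 (xbar n x) j : ℝ)) /
            (1 - upsRate ν t j))) *
        popbpTerm n p (upsRate ν t) x0 (extFin n y 0) (xbar n x)| ≤
        C * chainT (upsRate (lam + ε) t) (Real.exp ((2 * (n : ℝ) + 1) * ε * t n)) x0 n x := by
    intro x ν hν₁ hν₂
    have hνpos : 0 < ν := by linarith
    have hEν : ∀ i < n, 0 < upsRate ν t i ∧ upsRate ν t i ≤ 1 := by
      intro i hi
      refine ⟨Real.exp_pos _, ?_⟩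
      rw [upsRate, Real.exp_le_one_iff]
      nlinarith [hd i hi]
    have hterm_nn : 0 ≤ popbpTerm n p (upsRate ν t) x0 (extFin n y 0) (xbar n x) := by
      unfold popbpTerm
      refine Finset.prod_nonneg fun i hi => ?_
      rw [Finset.mem_range] at hi
      have h1 := ichoose_nonneg (xbar n x i : ℤ) (extFin n y 0 i : ℤ)
      have h2 := ichoose_nonneg ((xbar n x i : ℤ) - 1) ((prevx x0 (xbar n x) i : ℤ) - 1)
      have h3 := (hEν i hi).1
      have h4 : (0:ℝ) ≤ 1 - upsRate ν t i := by linarith [(hEν i hi).2]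
      have h5 : (0:ℝ) ≤ 1 - p := by linarith
      positivity
    by_cases hsupp : ∀ i < n, prevx x0 (xbar n x) i ≤ xbar n x i ∧ extFin n y 0 i ≤ xbar n x i
    case neg =>
      push_neg at hsupp
      obtain ⟨i, hi, hviol⟩ := hsupp
      have hzero : popbpTerm n p (upsRate ν t) x0 (extFin n y 0) (xbar n x) = 0 := by
        unfold popbpTerm
        apply Finset.prod_eq_zero (Finset.mem_range.mpr hi)
        by_cases hc : prevx x0 (xbar n x) i ≤ xbar n x i
        · have hy := hviol hc
          rw [ichoose_eq_zero_of_lt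
            (show (xbar n x i : ℤ) < (extFin n y 0 i : ℤ) by omega)]
          simp
        · rw [ichoose_eq_zero_of_lt
            (show (xbar n x i : ℤ) - 1 < (prevx x0 (xbar n x) i : ℤ) - 1 by omega)]
          simp
      rw [hzero]
      refine ⟨le_refl 0, hunn x, ?_⟩
      rw [mul_zero, abs_zero]
      exact hunn x
    case pos =>
      have hM1 : 1 ≤ prevx x0 (xbar n x) n := prevx_pos hx0 n x n
      have hMeq : prevx x0 (xbar n x) n = xbar n x (n - 1) := by
        unfold prevx; rw [if_neg (by omega)]
      have hchainmono : ∀ j k : ℕ, j ≤ k → k < n → xbar n x j ≤ xbar n x k := by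
        intro j k hjk hkn
        induction k with
        | zero =>
          have h : j = 0 := by omega
          rw [h]
        | succ k IHk =>
          rcases Nat.lt_or_ge j (k + 1) with h | h
          · have hstep : xbar n x k ≤ xbar n x (k + 1) := by
              have h2 := (hsupp (k + 1) hkn).1
              have h3 : prevx x0 (xbar n x) (k + 1) = xbar n x k := by
                unfold prevx; rw [if_neg (by omega)]; norm_num
              rwa [h3] at h2
            exact (IHk (by omega) (by omega)).trans hstep
          · have h2 : j = k + 1 := by omega
            rw [h2]
      have hxM : ∀ j < n, xbar n x j ≤ prevx x0 (xbar n x) n ∧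
          prevx x0 (xbar n x) j ≤ prevx x0 (xbar n x) n := by
        intro j hj
        have h1 : xbar n x j ≤ prevx x0 (xbar n x) n := by
          rw [hMeq]
          exact hchainmono j (n - 1) (by omega) (by omega)
        exact ⟨h1, le_trans (hsupp j hj).1 h1⟩
      -- per-factor bound
      have hfac : ∀ i ∈ Finset.range n,
          ichoose (xbar n x i : ℤ) (extFin n y 0 i : ℤ) * p ^ (extFin n y 0 i) *
            (1 - p) ^ (xbar n x i - extFin n y 0 i) *
            ichoose ((xbar n x i : ℤ) - 1) ((prevx x0 (xbar n x) i : ℤ) - 1) *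
            upsRate ν t i ^ (prevx x0 (xbar n x) i) *
            (1 - upsRate ν t i) ^ (xbar n x i - prevx x0 (xbar n x) i)
          ≤ (ichoose ((xbar n x i : ℤ) - 1) ((prevx x0 (xbar n x) i : ℤ) - 1) *
              upsRate (lam + ε) t i ^ (prevx x0 (xbar n x) i) *
              (1 - upsRate (lam + ε) t i) ^ (xbar n x i - prevx x0 (xbar n x) i)) *
            Real.exp (2 * ε * t n * ((prevx x0 (xbar n x) n : ℕ) : ℝ)) := by
        intro i hi
        rw [Finset.mem_range] at hi
        have hdet : ichoose (xbar n x i : ℤ) (extFin n y 0 i : ℤ) * p ^ (extFin n y 0 i) *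
            (1 - p) ^ (xbar n x i - extFin n y 0 i) ≤ 1 :=
          detect_le_one hp0 hp1 (hsupp i hi).2
        have hq : (0:ℝ) ≤ 1 - p := by linarith
        have hdet0 : 0 ≤ ichoose (xbar n x i : ℤ) (extFin n y 0 i : ℤ) * p ^ (extFin n y 0 i) *
            (1 - p) ^ (xbar n x i - extFin n y 0 i) := by
          have h1 := ichoose_nonneg (xbar n x i : ℤ) (extFin n y 0 i : ℤ)
          positivity
        have hich2 := ichoose_nonneg ((xbar n x i : ℤ) - 1) ((prevx x0 (xbar n x) i : ℤ) - 1)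
        have hpow := pow_bound hμ₁ hν₁ hν₂ (show lam + ε = (lam - ε) + 2 * ε by ring) hε0.le
          (hd i hi) (hdle i hi) (prevx x0 (xbar n x) i) (xbar n x i - prevx x0 (xbar n x) i)
          (prevx x0 (xbar n x) n) (hxM i hi).2
        have hEν0 : (0:ℝ) ≤ 1 - upsRate ν t i := by linarith [(hEν i hi).2]
        have hfl : 0 ≤ upsRate ν t i ^ (prevx x0 (xbar n x) i) *
            (1 - upsRate ν t i) ^ (xbar n x i - prevx x0 (xbar n x) i) := by
          have h1 := (hEν i hi).1.le
          positivity
        calc ichoose (xbar n x i : ℤ) (extFin n y 0 i : ℤ) * p ^ (extFin n y 0 i) *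
            (1 - p) ^ (xbar n x i - extFin n y 0 i) *
            ichoose ((xbar n x i : ℤ) - 1) ((prevx x0 (xbar n x) i : ℤ) - 1) *
            upsRate ν t i ^ (prevx x0 (xbar n x) i) *
            (1 - upsRate ν t i) ^ (xbar n x i - prevx x0 (xbar n x) i)
            = (ichoose (xbar n x i : ℤ) (extFin n y 0 i : ℤ) * p ^ (extFin n y 0 i) *
                (1 - p) ^ (xbar n x i - extFin n y 0 i) *
                ichoose ((xbar n x i : ℤ) - 1) ((prevx x0 (xbar n x) i : ℤ) - 1)) *
              (upsRate ν t i ^ (prevx x0 (xbar n x) i) *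
                (1 - upsRate ν t i) ^ (xbar n x i - prevx x0 (xbar n x) i)) := by ring
          _ ≤ (1 * ichoose ((xbar n x i : ℤ) - 1) ((prevx x0 (xbar n x) i : ℤ) - 1)) *
              (upsRate (lam + ε) t i ^ (prevx x0 (xbar n x) i) *
                (1 - upsRate (lam + ε) t i) ^ (xbar n x i - prevx x0 (xbar n x) i) *
                Real.exp (2 * ε * t n * ((prevx x0 (xbar n x) n : ℕ) : ℝ))) := by
              refine mul_le_mul ?_ ?_ hfl (by positivity)
              · exact mul_le_mul_of_nonneg_right hdet hich2
              · exact hpow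
          _ = (ichoose ((xbar n x i : ℤ) - 1) ((prevx x0 (xbar n x) i : ℤ) - 1) *
                upsRate (lam + ε) t i ^ (prevx x0 (xbar n x) i) *
                (1 - upsRate (lam + ε) t i) ^ (xbar n x i - prevx x0 (xbar n x) i)) *
              Real.exp (2 * ε * t n * ((prevx x0 (xbar n x) n : ℕ) : ℝ)) := by ring
      have hfacnn : ∀ i ∈ Finset.range n,
          0 ≤ ichoose (xbar n x i : ℤ) (extFin n y 0 i : ℤ) * p ^ (extFin n y 0 i) *
            (1 - p) ^ (xbar n x i - extFin n y 0 i) *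
            ichoose ((xbar n x i : ℤ) - 1) ((prevx x0 (xbar n x) i : ℤ) - 1) *
            upsRate ν t i ^ (prevx x0 (xbar n x) i) *
            (1 - upsRate ν t i) ^ (xbar n x i - prevx x0 (xbar n x) i) := by
        intro i hi
        rw [Finset.mem_range] at hi
        have h1 := ichoose_nonneg (xbar n x i : ℤ) (extFin n y 0 i : ℤ)
        have h2 := ichoose_nonneg ((xbar n x i : ℤ) - 1) ((prevx x0 (xbar n x) i : ℤ) - 1)
        have h3 := (hEν i hi).1
        have h4 : (0:ℝ) ≤ 1 - upsRate ν t i := by linarith [(hEν i hi).2]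
        have h5 : (0:ℝ) ≤ 1 - p := by linarith
        positivity
      have hTle : popbpTerm n p (upsRate ν t) x0 (extFin n y 0) (xbar n x)
          ≤ chainW (upsRate (lam + ε) t) x0 n (xbar n x) *
            Real.exp (2 * ε * t n * ((prevx x0 (xbar n x) n : ℕ) : ℝ)) ^ n := by
        unfold popbpTerm chainW
        calc ∏ i ∈ Finset.range n,
            (ichoose (xbar n x i : ℤ) (extFin n y 0 i : ℤ) * p ^ (extFin n y 0 i) *
              (1 - p) ^ (xbar n x i - extFin n y 0 i) *
              ichoose ((xbar n x i : ℤ) - 1) ((prevx x0 (xbar n x) i : ℤ) - 1) *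
              upsRate ν t i ^ (prevx x0 (xbar n x) i) *
              (1 - upsRate ν t i) ^ (xbar n x i - prevx x0 (xbar n x) i))
            ≤ ∏ i ∈ Finset.range n,
              ((ichoose ((xbar n x i : ℤ) - 1) ((prevx x0 (xbar n x) i : ℤ) - 1) *
                upsRate (lam + ε) t i ^ (prevx x0 (xbar n x) i) *
                (1 - upsRate (lam + ε) t i) ^ (xbar n x i - prevx x0 (xbar n x) i)) *
                Real.exp (2 * ε * t n * ((prevx x0 (xbar n x) n : ℕ) : ℝ))) :=
              Finset.prod_le_prod hfacnn hfac
          _ = (∏ i ∈ Finset.range n,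
              (ichoose ((xbar n x i : ℤ) - 1) ((prevx x0 (xbar n x) i : ℤ) - 1) *
                upsRate (lam + ε) t i ^ (prevx x0 (xbar n x) i) *
                (1 - upsRate (lam + ε) t i) ^ (xbar n x i - prevx x0 (xbar n x) i))) *
              Real.exp (2 * ε * t n * ((prevx x0 (xbar n x) n : ℕ) : ℝ)) ^ n := by
            rw [Finset.prod_mul_distrib, Finset.prod_const, Finset.card_range]
      have hρn : Real.exp (2 * ε * t n * ((prevx x0 (xbar n x) n : ℕ) : ℝ)) ^ n
          = Real.exp (2 * (n : ℝ) * ε * t n) ^ (prevx x0 (xbar n x) n) := by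
        rw [← Real.exp_nat_mul, ← Real.exp_nat_mul]
        congr 1
        ring
      have hW0 : 0 ≤ chainW (upsRate (lam + ε) t) x0 n (xbar n x) :=
        chainW_nonneg hαnonneg x0 (xbar n x)
      have hterm_le1 : popbpTerm n p (upsRate ν t) x0 (extFin n y 0) (xbar n x)
          ≤ chainW (upsRate (lam + ε) t) x0 n (xbar n x) *
            Real.exp (2 * (n : ℝ) * ε * t n) ^ (prevx x0 (xbar n x) n) := by
        rw [← hρn]
        exact hTle
      have hr2M : (0:ℝ) ≤ Real.exp ((2 * (n : ℝ) + 1) * ε * t n) ^ (prevx x0 (xbar n x) n) :=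
        pow_nonneg hr2pos.le _
      have huxeq : C * chainT (upsRate (lam + ε) t)
          (Real.exp ((2 * (n : ℝ) + 1) * ε * t n)) x0 n x
          = C * (chainW (upsRate (lam + ε) t) x0 n (xbar n x) *
            Real.exp ((2 * (n : ℝ) + 1) * ε * t n) ^ (prevx x0 (xbar n x) n)) := by
        rw [chainT]
      have hWr2 : 0 ≤ chainW (upsRate (lam + ε) t) x0 n (xbar n x) *
          Real.exp ((2 * (n : ℝ) + 1) * ε * t n) ^ (prevx x0 (xbar n x) n) :=
        mul_nonneg hW0 hr2M
      have hterm_le2 : popbpTerm n p (upsRate ν t) x0 (extFin n y 0) (xbar n x)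
          ≤ C * chainT (upsRate (lam + ε) t)
            (Real.exp ((2 * (n : ℝ) + 1) * ε * t n)) x0 n x := by
        rw [huxeq]
        calc popbpTerm n p (upsRate ν t) x0 (extFin n y 0) (xbar n x)
            ≤ chainW (upsRate (lam + ε) t) x0 n (xbar n x) *
              Real.exp (2 * (n : ℝ) * ε * t n) ^ (prevx x0 (xbar n x) n) := hterm_le1
          _ ≤ chainW (upsRate (lam + ε) t) x0 n (xbar n x) *
              Real.exp ((2 * (n : ℝ) + 1) * ε * t n) ^ (prevx x0 (xbar n x) n) :=
            mul_le_mul_of_nonneg_left (pow_le_pow_left₀ hr1pos.le hr12 _) hW0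
          _ ≤ C * (chainW (upsRate (lam + ε) t) x0 n (xbar n x) *
              Real.exp ((2 * (n : ℝ) + 1) * ε * t n) ^ (prevx x0 (xbar n x) n)) :=
            le_mul_of_one_le_left hWr2 hC1
      refine ⟨hterm_nn, hterm_le2, ?_⟩
      -- coefficient bound
      have hcoeff : |∑ j ∈ Finset.range n, (t (j + 1) - t j) *
          (((xbar n x j : ℝ) * upsRate ν t j - (prevx x0 (xbar n x) j : ℝ)) /
            (1 - upsRate ν t j))| ≤ K₁ * ((prevx x0 (xbar n x) n : ℕ) : ℝ) := by
        calc |∑ j ∈ Finset.range n, (t (j + 1) - t j) *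
            (((xbar n x j : ℝ) * upsRate ν t j - (prevx x0 (xbar n x) j : ℝ)) /
              (1 - upsRate ν t j))|
            ≤ ∑ j ∈ Finset.range n, |(t (j + 1) - t j) *
              (((xbar n x j : ℝ) * upsRate ν t j - (prevx x0 (xbar n x) j : ℝ)) /
                (1 - upsRate ν t j))| := Finset.abs_sum_le_sum_abs _ _
          _ ≤ ∑ j ∈ Finset.range n,
              2 * (t (j + 1) - t j) / (1 - Real.exp (-(lam - ε) * (t (j + 1) - t j))) *
                ((prevx x0 (xbar n x) n : ℕ) : ℝ) := by
            refine Finset.sum_le_sum fun j hj => ?_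
            rw [Finset.mem_range] at hj
            exact coeff_term_bound hμ₁ hν₁ (hd j hj) (xbar n x j) (prevx x0 (xbar n x) j)
              (prevx x0 (xbar n x) n) (hxM j hj).1 (hxM j hj).2
          _ = K₁ * ((prevx x0 (xbar n x) n : ℕ) : ℝ) := by
            rw [hK₁def, ← Finset.sum_mul]
      have habs : |(∑ j ∈ Finset.range n, (t (j + 1) - t j) *
          (((xbar n x j : ℝ) * upsRate ν t j - (prevx x0 (xbar n x) j : ℝ)) /
            (1 - upsRate ν t j))) *
          popbpTerm n p (upsRate ν t) x0 (extFin n y 0) (xbar n x)|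
          = |∑ j ∈ Finset.range n, (t (j + 1) - t j) *
            (((xbar n x j : ℝ) * upsRate ν t j - (prevx x0 (xbar n x) j : ℝ)) /
              (1 - upsRate ν t j))| *
            popbpTerm n p (upsRate ν t) x0 (extFin n y 0) (xbar n x) := by
        rw [abs_mul, abs_of_nonneg hterm_nn]
      have hMr1 : ((prevx x0 (xbar n x) n : ℕ) : ℝ) *
          Real.exp (2 * (n : ℝ) * ε * t n) ^ (prevx x0 (xbar n x) n)
          ≤ K₂ * Real.exp ((2 * (n : ℝ) + 1) * ε * t n) ^ (prevx x0 (xbar n x) n) := by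
        have h1 : ((prevx x0 (xbar n x) n : ℕ) : ℝ) *
            Real.exp (2 * (n : ℝ) * ε * t n) ^ (prevx x0 (xbar n x) n)
            = (((prevx x0 (xbar n x) n : ℕ) : ℝ) *
              Real.exp (-(ε * t n)) ^ (prevx x0 (xbar n x) n)) *
              Real.exp ((2 * (n : ℝ) + 1) * ε * t n) ^ (prevx x0 (xbar n x) n) := by
          rw [← hr1r2, mul_pow]
          ring
        rw [h1]
        exact mul_le_mul_of_nonneg_right (hK₂ _) hr2M
      rw [habs]
      calc |∑ j ∈ Finset.range n, (t (j + 1) - t j) *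
            (((xbar n x j : ℝ) * upsRate ν t j - (prevx x0 (xbar n x) j : ℝ)) /
              (1 - upsRate ν t j))| *
            popbpTerm n p (upsRate ν t) x0 (extFin n y 0) (xbar n x)
          ≤ (K₁ * ((prevx x0 (xbar n x) n : ℕ) : ℝ)) *
            (chainW (upsRate (lam + ε) t) x0 n (xbar n x) *
              Real.exp (2 * (n : ℝ) * ε * t n) ^ (prevx x0 (xbar n x) n)) :=
          mul_le_mul hcoeff hterm_le1 hterm_nn
            (mul_nonneg hK₁0 (Nat.cast_nonneg _))
        _ = (K₁ * chainW (upsRate (lam + ε) t) x0 n (xbar n x)) *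
            (((prevx x0 (xbar n x) n : ℕ) : ℝ) *
              Real.exp (2 * (n : ℝ) * ε * t n) ^ (prevx x0 (xbar n x) n)) := by ring
        _ ≤ (K₁ * chainW (upsRate (lam + ε) t) x0 n (xbar n x)) *
            (K₂ * Real.exp ((2 * (n : ℝ) + 1) * ε * t n) ^ (prevx x0 (xbar n x) n)) :=
          mul_le_mul_of_nonneg_left hMr1 (mul_nonneg hK₁0 hW0)
        _ = (K₁ * K₂) * (chainW (upsRate (lam + ε) t) x0 n (xbar n x) *
            Real.exp ((2 * (n : ℝ) + 1) * ε * t n) ^ (prevx x0 (xbar n x) n)) := by ring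
        _ ≤ C * (chainW (upsRate (lam + ε) t) x0 n (xbar n x) *
            Real.exp ((2 * (n : ℝ) + 1) * ε * t n) ^ (prevx x0 (xbar n x) n)) :=
          mul_le_mul_of_nonneg_right hK₁K₂C hWr2
        _ = C * chainT (upsRate (lam + ε) t)
            (Real.exp ((2 * (n : ℝ) + 1) * ε * t n)) x0 n x := by rw [chainT]
  -- assembly
  have hlam1 : lam - ε ≤ lam := by linarith
  have hlam2 : lam ≤ lam + ε := by linarith
  constructor
  · refine Summable.of_nonneg_of_le (fun x => abs_nonneg _)
      (fun x => (hkey x lam hlam1 hlam2).2.2) hu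
  · have hg0 : Summable (fun x : Fin n → ℕ+ =>
        popbpTerm n p (upsRate lam t) x0 (extFin n y 0) (xbar n x)) :=
      Summable.of_nonneg_of_le (fun x => (hkey x lam hlam1 hlam2).1)
        (fun x => (hkey x lam hlam1 hlam2).2.1) hu
    have hlammem : lam ∈ Set.Ioo (lam - ε) (lam + ε) := ⟨by linarith, by linarith⟩
    have hmain := hasDerivAt_tsum_of_isPreconnected hu
      (isOpen_Ioo (a := lam - ε) (b := lam + ε)) isPreconnected_Ioo
      (g := fun (x : Fin n → ℕ+) (ν : ℝ) =>
        popbpTerm n p (upsRate ν t) x0 (extFin n y 0) (xbar n x))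
      (g' := fun (x : Fin n → ℕ+) (ν : ℝ) =>
        (∑ j ∈ Finset.range n, (t (j + 1) - t j) *
            (((xbar n x j : ℝ) * upsRate ν t j - (prevx x0 (xbar n x) j : ℝ)) /
              (1 - upsRate ν t j))) *
          popbpTerm n p (upsRate ν t) x0 (extFin n y 0) (xbar n x))
      (fun x ν hν => hasDerivAt_popbpF n p t x0 hx0 hd y x (by
        have := hν.1
        simp only [Set.mem_Ioo] at hν
        linarith [hν.1]))
      (fun x ν hν => by
        rw [Real.norm_eq_abs]
        exact (hkey x ν hν.1.le hν.2.le).2.2)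
      hlammem hg0 hlammem
    exact hmain
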